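/- arXiv:1009.3608 — 2 statements merged into one kernel-verified Lean document; each statement's English description precedes it below -/
import Mathlib

section
/- Every k-regular graph with even girth g = 2r has at least 2·∑_{i=0}^{r−1}(k−1)^i vertices. -/
section MooreAux


open SimpleGraph Walk

variable {V : Type*} [DecidableEq V] {G : SimpleGraph V}

lemma two_paths_cycle (n : ℕ) : ∀ {x y : V} (p q : G.Walk x y), p.length ≤ n → p.IsPath →
    q.IsPath → p ≠ q →
    ∃ (z : V) (c : G.Walk z z), c.IsCycle ∧ c.length ≤ p.length + q.length := by
  induction n with
  | zero =>
    intro x y p q hn hp hq hne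
    rw [Nat.le_zero] at hn
    cases p with
    | nil =>
      rw [Walk.isPath_iff_eq_nil] at hq
      exact absurd hq.symm hne
    | cons h p' => simp at hn
  | succ n ih =>
    intro x y p q hn hp hq hne
    cases p with
    | nil =>
      rw [Walk.isPath_iff_eq_nil] at hq
      exact absurd hq.symm hne
    | @cons _ u _ h p' =>
      by_cases hmem : s(x, u) ∈ q.edges
      · -- q must start with the same edge
        cases q with
        | nil =>
          have := hp
          rw [Walk.isPath_iff_eq_nil] at this
          simp at this
        | @cons _ w _ h' q' =>
          rw [Walk.edges_cons, List.mem_cons] at hmem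
          rcases hmem with hmem | hmem
          · have huw : u = w := by
              exact Sym2.congr_right.mp hmem
            subst huw
            have hne' : p' ≠ q' := by
              rintro rfl; exact hne rfl
            obtain ⟨z, c, hc, hlen⟩ := ih p' q' (by simpa using hn)
              hp.of_cons hq.of_cons hne'
            exact ⟨z, c, hc, by simp only [Walk.length_cons]; omega⟩
          · exfalso
            have hx : x ∈ q'.support := Walk.fst_mem_support_of_mem_edges _ hmem
            rw [Walk.cons_isPath_iff] at hq
            exact hq.2 hx
      · -- construct a cycle directly
        set t := (p'.append q.reverse).bypass with ht
        have htp : t.IsPath := Walk.bypass_isPath _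
        have hte : s(x, u) ∉ t.edges := by
          intro hmem'
          have : s(x, u) ∈ (p'.append q.reverse).edges :=
            Walk.edges_bypass_subset _ hmem'
          rw [Walk.edges_append, List.mem_append] at this
          rcases this with h1 | h1
          · have hx : x ∈ p'.support := Walk.fst_mem_support_of_mem_edges _ h1
            rw [Walk.cons_isPath_iff] at hp
            exact hp.2 hx
          · rw [Walk.edges_reverse, List.mem_reverse] at h1
            exact hmem h1
        refine ⟨x, Walk.cons h t, ?_, ?_⟩
        · rw [Walk.cons_isCycle_iff]
          exact ⟨htp, hte⟩
        · have := Walk.length_bypass_le (p'.append q.reverse)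
          rw [← ht] at this
          rw [Walk.length_cons, Walk.length_cons]
          rw [Walk.length_append, Walk.length_reverse] at this
          omega

open Finset

lemma egirth_le_cycle {z : V} (c : G.Walk z z) (hc : c.IsCycle) :
    G.egirth ≤ c.length := by
  exact iInf_le_of_le z (iInf_le_of_le c (iInf_le_of_le hc le_rfl))

lemma reach_dist_triangle {u v w : V} (h1 : G.Reachable u v) (h2 : G.Reachable v w) :
    G.dist u w ≤ G.dist u v + G.dist v w := by
  obtain ⟨p, hp⟩ := h1.exists_walk_length_eq_dist
  obtain ⟨q, hq⟩ := h2.exists_walk_length_eq_dist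
  rw [← hp, ← hq, ← Walk.length_append]
  apply dist_le

lemma dist_le_of_mem_support {u v z : V} (p : G.Walk u v) (hz : z ∈ p.support) :
    G.dist u z ≤ p.length :=
  le_trans (dist_le (p.takeUntil z hz)) (Walk.length_takeUntil_le p hz)

lemma eq_end_of_mem_support_of_dist {u v z : V} (p : G.Walk u v) (hz : z ∈ p.support)
    (hd : p.length ≤ G.dist u z) : z = v := by
  have h1 : G.dist u z ≤ (p.takeUntil z hz).length := dist_le _
  have h2 : (p.takeUntil z hz).length + (p.dropUntil z hz).length = p.length := by
    rw [← Walk.length_append, Walk.take_spec]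
  have h3 : (p.dropUntil z hz).length = 0 := by omega
  exact Walk.eq_of_length_eq_zero h3

section helpers

lemma isPath_concat' {u v z : V} (p : G.Walk u v) (h : G.Adj v z) (hp : p.IsPath)
    (hz : z ∉ p.support) : (p.concat h).IsPath := by
  have h1 : (p.concat h).reverse.IsPath := by
    rw [Walk.reverse_concat, Walk.cons_isPath_iff]
    exact ⟨hp.reverse, by simpa [Walk.support_reverse] using hz⟩
  have := h1.reverse
  rwa [Walk.reverse_reverse] at this

lemma concat_ne_concat {x w1 w2 z : V} (p1 : G.Walk x w1) (p2 : G.Walk x w2)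
    (h1 : G.Adj w1 z) (h2 : G.Adj w2 z) (hne : w1 ≠ w2) :
    p1.concat h1 ≠ p2.concat h2 := by
  intro he
  have hs := congrArg (fun t => t.reverse.support) he
  simp only [Walk.reverse_concat, Walk.support_cons] at hs
  rw [p1.reverse.support_eq_cons, p2.reverse.support_eq_cons] at hs
  simp only [List.cons.injEq] at hs
  exact hne hs.2.1

end helpers

section girth

variable {r : ℕ}

lemma girth_paths_bound (hg : G.egirth = 2 * r) {x y : V} (p q : G.Walk x y)
    (hp : p.IsPath) (hq : q.IsPath) (hne : p ≠ q) :
    2 * r ≤ p.length + q.length := by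
  obtain ⟨z, c, hc, hlen⟩ := two_paths_cycle p.length p q le_rfl hp hq hne
  have h := egirth_le_cycle c hc
  rw [hg] at h
  have h2 : ((2 * r : ℕ) : ℕ∞) ≤ (c.length : ℕ∞) := by
    push_cast
    exact_mod_cast h
  have h3 : 2 * r ≤ c.length := by exact_mod_cast h2
  omega

/-- If `w` is at distance `i+1` from `c`, it has at most one neighbor at distance `i` from `c`. -/
lemma unique_nbr_at_dist (hg : G.egirth = 2 * r) {c z w1 w2 : V} {i : ℕ} (hi : i + 2 ≤ r)
    (hr1 : G.Reachable c w1) (hr2 : G.Reachable c w2)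
    (h1 : G.dist c w1 = i) (h2 : G.dist c w2 = i) (hz : G.dist c z = i + 1)
    (ha1 : G.Adj w1 z) (ha2 : G.Adj w2 z) : w1 = w2 := by
  by_contra hne
  obtain ⟨p1, hp1, hl1⟩ := hr1.exists_path_of_dist
  obtain ⟨p2, hp2, hl2⟩ := hr2.exists_path_of_dist
  have hzs1 : z ∉ p1.support := fun hmem =>
    by have := dist_le_of_mem_support p1 hmem; omega
  have hzs2 : z ∉ p2.support := fun hmem =>
    by have := dist_le_of_mem_support p2 hmem; omega
  have hq1 : (p1.concat ha1).IsPath := isPath_concat' p1 ha1 hp1 hzs1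
  have hq2 : (p2.concat ha2).IsPath := isPath_concat' p2 ha2 hp2 hzs2
  have hneq : p1.concat ha1 ≠ p2.concat ha2 := concat_ne_concat _ _ _ _ hne
  have := girth_paths_bound hg _ _ hq1 hq2 hneq
  rw [Walk.length_concat, Walk.length_concat, hl1, hl2] at this
  omega

/-- A neighbor `z` of `w` (with `dist b w = i+1`) satisfies `dist b z ≠ i+1`. -/
lemma nbr_dist_ne (hg : G.egirth = 2 * r) {b w z : V} {i : ℕ} (hi : i + 2 ≤ r)
    (hrb : G.Reachable b w) (hdbw : G.dist b w = i + 1) (hz : G.Adj w z) :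
    G.dist b z ≠ i + 1 := by
  intro hdbz
  have hrz : G.Reachable b z := hrb.trans hz.reachable
  obtain ⟨pw, hpw, hlw⟩ := hrb.exists_path_of_dist
  obtain ⟨pz, hpz, hlz⟩ := hrz.exists_path_of_dist
  have hzs : z ∉ pw.support := by
    intro hmem
    have := eq_end_of_mem_support_of_dist pw hmem (by omega)
    exact hz.ne this.symm
  have hq : (pw.concat hz).IsPath := isPath_concat' pw hz hpw hzs
  have hneq : pw.concat hz ≠ pz := by
    intro he
    have := congrArg Walk.length he
    rw [Walk.length_concat, hlw, hlz] at this
    omega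
  have := girth_paths_bound hg _ _ hq hpz hneq
  rw [Walk.length_concat, hlw, hlz] at this
  omega

/-- Classification of neighbors of a vertex `w` with `dist a w = i`, `dist b w = i + 1`. -/
lemma nbr_classify (hg : G.egirth = 2 * r) (hab : G.Adj a b) {w z : V} {i : ℕ} (hi : i + 2 ≤ r)
    (hra : G.Reachable a w) (hdaw : G.dist a w = i) (hdbw : G.dist b w = i + 1)
    (hz : G.Adj w z) :
    G.dist b z = i ∨ (G.dist a z = i + 1 ∧ G.dist b z = i + 2) := by
  have hrb : G.Reachable b w := (hab.symm.reachable).trans hra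
  have hrbz : G.Reachable b z := hrb.trans hz.reachable
  have hraz : G.Reachable a z := hra.trans hz.reachable
  have hwz : G.dist w z = 1 := dist_eq_one_iff_adj.mpr hz
  have hzw : G.dist z w = 1 := dist_eq_one_iff_adj.mpr hz.symm
  have hba : G.dist b a = 1 := dist_eq_one_iff_adj.mpr hab.symm
  have ht1 : G.dist b z ≤ i + 2 := by
    have := reach_dist_triangle hrb hz.reachable
    omega
  have ht2 : G.dist b w ≤ G.dist b z + 1 := by
    have := reach_dist_triangle hrbz hz.symm.reachable
    omega
  have hne := nbr_dist_ne hg hi hrb hdbw hz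
  rcases (by omega : G.dist b z = i ∨ G.dist b z = i + 2) with h | h
  · exact Or.inl h
  · refine Or.inr ⟨?_, h⟩
    have ht3 : G.dist a z ≤ i + 1 := by
      have := reach_dist_triangle hra hz.reachable
      omega
    have ht4 : G.dist b z ≤ 1 + G.dist a z := by
      have := reach_dist_triangle hab.symm.reachable hraz
      omega
    omega

end girth

open scoped Classical in
noncomputable def sph (G : SimpleGraph V) [Fintype V] (a b : V) (i : ℕ) : Finset V :=
  Finset.univ.filter (fun w => G.Reachable a w ∧ G.dist a w = i ∧ G.dist b w = i + 1)

lemma mem_sph [Fintype V] {a b w : V} {i : ℕ} :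
    w ∈ sph G a b i ↔ G.Reachable a w ∧ G.dist a w = i ∧ G.dist b w = i + 1 := by
  classical
  simp [sph]

variable {r k : ℕ}

lemma good_nbrs_card [Fintype V] [DecidableRel G.Adj] (hg : G.egirth = 2 * r) {a b : V}
    (hab : G.Adj a b) (hreg : G.IsRegularOfDegree k) {w : V} {i : ℕ} (hi : i + 2 ≤ r)
    (hra : G.Reachable a w) (hdaw : G.dist a w = i) (hdbw : G.dist b w = i + 1) :
    k - 1 ≤ ((G.neighborFinset w).filter
      (fun z => G.dist a z = i + 1 ∧ G.dist b z = i + 2)).card := by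
  classical
  have hrb : G.Reachable b w := (hab.symm.reachable).trans hra
  have hcard : ((G.neighborFinset w).filter
        (fun z => G.dist a z = i + 1 ∧ G.dist b z = i + 2)).card +
      ((G.neighborFinset w).filter
        (fun z => ¬ (G.dist a z = i + 1 ∧ G.dist b z = i + 2))).card = k := by
    rw [Finset.card_filter_add_card_filter_not]
    rw [card_neighborFinset_eq_degree]
    exact hreg w
  have hbad : ((G.neighborFinset w).filter
      (fun z => ¬ (G.dist a z = i + 1 ∧ G.dist b z = i + 2))).card ≤ 1 := by
    rw [Finset.card_le_one]
    intro z1 h1 z2 h2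
    rw [Finset.mem_filter, mem_neighborFinset] at h1 h2
    have hc1 := nbr_classify hg hab hi hra hdaw hdbw h1.1
    have hc2 := nbr_classify hg hab hi hra hdaw hdbw h2.1
    have hd1 : G.dist b z1 = i := by
      rcases hc1 with h | h
      exacts [h, absurd h h1.2]
    have hd2 : G.dist b z2 = i := by
      rcases hc2 with h | h
      exacts [h, absurd h h2.2]
    exact unique_nbr_at_dist hg hi (hrb.trans h1.1.reachable) (hrb.trans h2.1.reachable)
      hd1 hd2 hdbw h1.1.symm h2.1.symm
  omega

lemma sph_growth [Fintype V] [DecidableRel G.Adj] (hg : G.egirth = 2 * r) {a b : V}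
    (hab : G.Adj a b) (hreg : G.IsRegularOfDegree k) {i : ℕ} (hi : i + 2 ≤ r) :
    (k - 1) * (sph G a b i).card ≤ (sph G a b (i + 1)).card := by
  classical
  set S := ((sph G a b i) ×ˢ (sph G a b (i + 1))).filter (fun p => G.Adj p.1 p.2) with hS
  have hfst : ∀ x ∈ S, x.1 ∈ sph G a b i := by
    intro x hx
    rw [hS, Finset.mem_filter, Finset.mem_product] at hx
    exact hx.1.1
  have h1 : (k - 1) * (sph G a b i).card ≤ S.card := by
    rw [Finset.card_eq_sum_card_fiberwise hfst]
    rw [mul_comm, ← smul_eq_mul, ← Finset.sum_const]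
    apply Finset.sum_le_sum
    intro w hw
    rw [mem_sph] at hw
    obtain ⟨hra, hdaw, hdbw⟩ := hw
    refine le_trans (good_nbrs_card hg hab hreg hi hra hdaw hdbw) ?_
    apply Finset.card_le_card_of_injOn (fun z => (w, z))
    · intro z hz
      rw [Finset.mem_coe, Finset.mem_filter, mem_neighborFinset] at hz
      rw [Finset.mem_coe, Finset.mem_filter, hS, Finset.mem_filter, Finset.mem_product]
      refine ⟨⟨⟨mem_sph.mpr ⟨hra, hdaw, hdbw⟩, mem_sph.mpr ⟨hra.trans hz.1.reachable, hz.2⟩⟩,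
        hz.1⟩, rfl⟩
    · intro z1 _ z2 _ he
      exact (Prod.mk.injEq _ _ _ _).mp he |>.2
  have h2 : S.card ≤ (sph G a b (i + 1)).card := by
    apply Finset.card_le_card_of_injOn Prod.snd
    · intro x hx
      rw [Finset.mem_coe, hS, Finset.mem_filter, Finset.mem_product] at hx
      exact hx.1.2
    · intro x hx y hy he
      rw [Finset.mem_coe, hS, Finset.mem_filter, Finset.mem_product] at hx hy
      obtain ⟨⟨hx1, hx2⟩, hxadj⟩ := hx
      obtain ⟨⟨hy1, hy2⟩, hyadj⟩ := hy
      rw [mem_sph] at hx1 hx2 hy1 hy2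
      have : x.1 = y.1 := by
        refine unique_nbr_at_dist (z := y.2) hg hi hx1.1 hy1.1 hx1.2.1 hy1.2.1 ?_ ?_ ?_
        · exact he ▸ hx2.2.1
        · exact he ▸ hxadj
        · exact hyadj
      exact Prod.ext this he
  exact le_trans h1 h2

lemma sph_card_ge [Fintype V] [DecidableRel G.Adj] (hg : G.egirth = 2 * r) {a b : V}
    (hab : G.Adj a b) (hreg : G.IsRegularOfDegree k) :
    ∀ i, i + 1 ≤ r → (k - 1) ^ i ≤ (sph G a b i).card := by
  intro i
  induction i with
  | zero =>
    intro _
    have ha : a ∈ sph G a b 0 := mem_sph.mpr ⟨Reachable.refl a, dist_self,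
      by simpa using dist_eq_one_iff_adj.mpr hab.symm⟩
    simpa using Finset.card_pos.mpr ⟨a, ha⟩
  | succ i ih =>
    intro hi
    calc (k - 1) ^ (i + 1) = (k - 1) * (k - 1) ^ i := by ring
    _ ≤ (k - 1) * (sph G a b i).card := Nat.mul_le_mul_left _ (ih (by omega))
    _ ≤ (sph G a b (i + 1)).card := sph_growth hg hab hreg (by omega)
end MooreAux

open SimpleGraph Walk Finset in
/-- Moore bound for even girth: every `k`-regular graph with girth `2r` has at least
`2·∑_{i=0}^{r-1}(k-1)^i` vertices. -/
theorem moore_bound_even_girth {V : Type*} [Fintype V] (G : SimpleGraph V)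
    [DecidableRel G.Adj] (k r : ℕ)
    (hreg : G.IsRegularOfDegree k) (hg : G.egirth = 2 * r) :
    2 * ∑ i ∈ Finset.range r, (k - 1) ^ i ≤ Fintype.card V := by
  classical
  -- r ≥ 2
  have h3 : (3 : ℕ∞) ≤ 2 * (r : ℕ∞) := hg ▸ three_le_egirth
  have hr2 : 2 ≤ r := by
    have : ((3 : ℕ) : ℕ∞) ≤ ((2 * r : ℕ) : ℕ∞) := by push_cast; exact_mod_cast h3
    have := Nat.cast_le.mp this
    omega
  -- get an edge
  have hnac : ¬ G.IsAcyclic := by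
    intro h
    rw [h.egirth_eq_top] at hg
    have : ((2 * r : ℕ) : ℕ∞) = ⊤ := by push_cast; exact hg.symm
    exact (ENat.coe_ne_top _) this
  obtain ⟨a, c, hc, hlen⟩ := exists_egirth_eq_length.mpr hnac
  obtain ⟨b, hab⟩ : ∃ b, G.Adj a b := by
    cases c with
    | nil => simp [Walk.isCycle_def] at hc
    | cons h p => exact ⟨_, h⟩
  -- counting
  set C : ℕ → Finset V := fun i => sph G a b i ∪ sph G b a i with hC
  have hABdisj : ∀ i j, sph G a b i ∩ sph G b a j = ∅ := by
    intro i j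
    rw [Finset.eq_empty_iff_forall_notMem]
    intro w hw
    rw [Finset.mem_inter, mem_sph, mem_sph] at hw
    omega
  have hcardC : ∀ i, i + 1 ≤ r → 2 * (k - 1) ^ i ≤ (C i).card := by
    intro i hi
    have hd : Disjoint (sph G a b i) (sph G b a i) :=
      Finset.disjoint_iff_inter_eq_empty.mpr (hABdisj i i)
    rw [hC]
    simp only
    rw [Finset.card_union_of_disjoint hd]
    have h1 := sph_card_ge hg hab hreg i hi
    have h2 := sph_card_ge (by rwa [SimpleGraph.egirth] at hg ⊢) hab.symm hreg i hi
    omega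
  have hdisjC : ∀ i ∈ Finset.range r, ∀ j ∈ Finset.range r, i ≠ j →
      Disjoint (C i) (C j) := by
    intro i _ j _ hij
    rw [Finset.disjoint_left]
    intro w h1 h2
    rw [hC] at h1 h2
    simp only [Finset.mem_union, mem_sph] at h1 h2
    omega
  calc 2 * ∑ i ∈ Finset.range r, (k - 1) ^ i
      = ∑ i ∈ Finset.range r, 2 * (k - 1) ^ i := Finset.mul_sum _ _ _
    _ ≤ ∑ i ∈ Finset.range r, (C i).card := by
        apply Finset.sum_le_sum
        intro i hi
        exact hcardC i (by rw [Finset.mem_range] at hi; omega)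
    _ = ((Finset.range r).biUnion C).card := (Finset.card_biUnion hdisjC).symm
    _ ≤ (Finset.univ : Finset V).card := Finset.card_le_univ _
    _ = Fintype.card V := Finset.card_univ
end

section
/- The explicit 67-vertex graph given by the adjacency list in the paper has girth exactly 7 (it has girth at least 7 and contains a 7-cycle). -/
/-- The 134 edges (as ordered pairs of natural numbers, lower endpoint first) of the
67-vertex graph given by the adjacency list in the paper. -/
def cage47Edges : List (ℕ × ℕ) := [
  (0, 1), (0, 2), (0, 3), (0, 4), (1, 5), (1, 6), (1, 7), (2, 8), (2, 9), (2, 10), (3, 11),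
  (3, 12), (3, 13), (4, 14), (4, 15), (4, 16), (5, 17), (5, 18), (5, 19), (6, 20), (6, 21),
  (6, 22), (7, 23), (7, 24), (7, 25), (8, 26), (8, 27), (8, 28), (9, 29), (9, 30), (9, 31),
  (10, 32), (10, 33), (10, 34), (11, 35), (11, 36), (11, 37), (12, 38), (12, 39), (12, 40),
  (13, 41), (13, 42), (13, 43), (14, 44), (14, 45), (14, 46), (15, 47), (15, 48), (15, 49),
  (16, 50), (16, 51), (16, 52), (17, 33), (17, 37), (17, 57), (18, 28), (18, 41), (18, 60),
  (19, 30), (19, 38), (19, 48), (20, 31), (20, 35), (20, 66), (21, 32), (21, 42), (21, 52),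
  (22, 27), (22, 39), (22, 54), (23, 29), (23, 43), (23, 61), (24, 26), (24, 36), (24, 46),
  (25, 34), (25, 40), (25, 63), (26, 47), (26, 53), (27, 43), (27, 45), (28, 52), (28, 56),
  (29, 49), (29, 59), (30, 51), (30, 62), (31, 46), (31, 57), (32, 44), (32, 65), (33, 50),
  (33, 55), (34, 48), (34, 64), (35, 48), (35, 56), (36, 51), (36, 65), (37, 45), (37, 59),
  (38, 44), (38, 53), (39, 49), (39, 55), (40, 52), (40, 57), (41, 46), (41, 64), (42, 47),
  (42, 62), (43, 50), (44, 61), (45, 63), (47, 58), (49, 65), (50, 66), (51, 54), (53, 59),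
  (53, 66), (54, 58), (54, 64), (55, 56), (55, 62), (56, 61), (57, 58), (58, 61), (59, 64),
  (60, 63), (60, 65), (60, 66), (62, 63) ]

/-- The 67-vertex graph given by the adjacency list in the paper. -/
def cage47 : SimpleGraph (Fin 67) :=
  SimpleGraph.fromRel (fun v w => ((v : ℕ), (w : ℕ)) ∈ cage47Edges)

instance : DecidableRel cage47.Adj := fun v w =>
  decidable_of_iff
    (v ≠ w ∧ (((v : ℕ), (w : ℕ)) ∈ cage47Edges ∨ ((w : ℕ), (v : ℕ)) ∈ cage47Edges))
    (by rw [cage47, SimpleGraph.fromRel_adj])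


/-! ### Auxiliary machinery for the girth computation -/

/-- All 67 neighbor lists (each of length 4), packed into a single natural number,
28 bits (4 fields of 7 bits) per vertex. -/
def nbrCode : ℕ := 2548132130480942916534786558806831272373304403571945992285982134479865919784821269731880723020971028168697223046074428950115009442628219182923184211378766194725249598944486524035219523446546733862053168301145986810254083359042111334910527425282537196971803035446800180138057576626611628627479641178932779418181940939738388871291423540294489149728357410458779209753311029724721863599353178440795171996685448706015085994361887714003043940495718021141566641438879898959018499415616765016585326218562914954609103999148154129973355278891149456041085965523327599417278721

/-- The list of neighbors of vertex `v`, extracted from `nbrCode`. -/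
def nbrL (v : ℕ) : List ℕ :=
  [nbrCode >>> (28 * v) &&& 127, nbrCode >>> (28 * v + 7) &&& 127,
   nbrCode >>> (28 * v + 14) &&& 127, nbrCode >>> (28 * v + 21) &&& 127]

/-- DFS check: `true` means that no cycle of length between 3 and `3 + fuel` based at `v0`
(and otherwise using only vertices `> v0`) was found extending the current path;
`cur` is the current vertex and `seen` is the list of vertices used so far (including
`cur` and `v0`). -/
def good : ℕ → ℕ → ℕ → List ℕ → Bool
  | 0, _, _, _ => true
  | fuel+1, v0, cur, seen =>
    (nbrL cur).all fun x =>
      if x = v0 then decide (seen.length < 3)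
      else if x ≤ v0 then true
      else if x ∈ seen then true
      else good fuel v0 x (x :: seen)

def check : Bool := (List.range 67).all fun v0 => good 6 v0 v0 [v0]

set_option maxHeartbeats 4000000 in
set_option maxRecDepth 20000 in
lemma check_eq_true : check = true := by decide

set_option maxRecDepth 20000 in
lemma edges_ok : ∀ p ∈ cage47Edges, p.2 ∈ nbrL p.1 ∧ p.1 ∈ nbrL p.2 := by decide

lemma adj_mem_nbr (v w : Fin 67) (h : cage47.Adj v w) : (w : ℕ) ∈ nbrL (v : ℕ) := by
  rw [cage47, SimpleGraph.fromRel_adj] at h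
  rcases h.2 with h' | h'
  · exact (edges_ok _ h').1
  · exact (edges_ok _ h').2

lemma good_sound (v0 : ℕ) :
    ∀ (rest : List ℕ) (fuel : ℕ) (cur : ℕ) (seen : List ℕ),
      rest.length < fuel →
      List.Chain (fun a b => b ∈ nbrL a) cur (rest ++ [v0]) →
      (∀ x ∈ rest, v0 < x ∧ x ∉ seen) →
      rest.Nodup →
      3 ≤ seen.length + rest.length →
      good fuel v0 cur seen = false := by
  intro rest
  induction rest with
  | nil =>
    intro fuel cur seen hfuel hchain _ _ hlen
    obtain ⟨f, rfl⟩ : ∃ f, fuel = f + 1 := ⟨fuel - 1, by omega⟩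
    have hmem : v0 ∈ nbrL cur := by cases hchain with | cons_cons h _ => exact h
    simp only [good, List.all_eq_false]
    refine ⟨v0, hmem, ?_⟩
    simp only [List.length_nil, Nat.add_zero] at hlen
    simp [Nat.not_lt.mpr hlen]
  | cons x rest ih =>
    intro fuel cur seen hfuel hchain hinv hnd hlen
    obtain ⟨f, rfl⟩ : ∃ f, fuel = f + 1 := ⟨fuel - 1, by omega⟩
    have hmem : x ∈ nbrL cur := by cases hchain with | cons_cons h _ => exact h
    have hchain' : List.Chain (fun a b => b ∈ nbrL a) x (rest ++ [v0]) := by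
      cases hchain with | cons_cons _ h => exact h
    have hx := hinv x List.mem_cons_self
    simp only [good, List.all_eq_false]
    refine ⟨x, hmem, ?_⟩
    rw [if_neg (by omega), if_neg (by simpa using Nat.not_le.mpr hx.1),
      if_neg (by simpa using hx.2)]
    rw [ih f x (x :: seen) (by simpa using Nat.lt_of_succ_lt_succ hfuel) hchain'
      (fun y hy => ⟨(hinv y (List.mem_cons_of_mem _ hy)).1, by
        simp only [List.mem_cons, not_or]
        exact ⟨fun h => (List.nodup_cons.mp hnd).1 (h ▸ hy),
          (hinv y (List.mem_cons_of_mem _ hy)).2⟩⟩)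
      (List.nodup_cons.mp hnd).2
      (by simp only [List.length_cons] at hlen ⊢; omega)]
    simp

/-- An explicit 7-cycle: 0 - 1 - 5 - 17 - 33 - 10 - 2 - 0. -/
def c7 : cage47.Walk 0 0 :=
  .cons (show cage47.Adj 0 1 by decide) (.cons (show cage47.Adj 1 5 by decide)
    (.cons (show cage47.Adj 5 17 by decide) (.cons (show cage47.Adj 17 33 by decide)
    (.cons (show cage47.Adj 33 10 by decide) (.cons (show cage47.Adj 10 2 by decide)
    (.cons (show cage47.Adj 2 0 by decide) .nil))))))

lemma c7_isCycle : c7.IsCycle := by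
  rw [SimpleGraph.Walk.isCycle_def, SimpleGraph.Walk.isTrail_def]
  refine ⟨by decide, by simp [c7], by decide⟩

lemma egirth_le_seven : cage47.egirth ≤ 7 := by
  have hle : cage47.egirth ≤ (c7.length : ℕ∞) :=
    iInf_le_of_le 0 (iInf_le_of_le c7 (iInf_le _ c7_isCycle))
  have h7 : c7.length = 7 := rfl
  rw [h7] at hle
  exact_mod_cast hle

lemma seven_le_egirth : 7 ≤ cage47.egirth := by
  rw [SimpleGraph.le_egirth]
  intro a w₀ hw₀
  by_contra hlt
  rw [not_le] at hlt
  -- rotate the cycle so that it is based at its minimal vertex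
  have hane : (w₀.support.toFinset : Finset (Fin 67)).Nonempty :=
    ⟨a, by simp [SimpleGraph.Walk.start_mem_support]⟩
  set u : Fin 67 := w₀.support.toFinset.min' hane with hu
  have humem : u ∈ w₀.support := by
    have := w₀.support.toFinset.min'_mem hane
    simpa using this
  have humin : ∀ x ∈ w₀.support, u ≤ x := fun x hx =>
    w₀.support.toFinset.min'_le x (by simpa using hx)
  set w : cage47.Walk u u := w₀.rotate u humem with hwdef
  have hw : w.IsCycle := hw₀.rotate humem
  have hlenw : w.length = w₀.length := by
    have h1 := congr_arg SimpleGraph.Walk.length (w₀.take_spec humem)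
    rw [SimpleGraph.Walk.length_append] at h1
    rw [hwdef, SimpleGraph.Walk.rotate, SimpleGraph.Walk.length_append]
    omega
  have hsupp : ∀ x ∈ w.support.tail, u ≤ x := by
    intro x hx
    have hr := SimpleGraph.Walk.support_rotate w₀ u humem
    have : x ∈ w₀.support.tail := hr.mem_iff.mp hx
    exact humin x (List.mem_of_mem_tail this)
  have hlen6 : w.length ≤ 6 := by
    rw [hlenw]
    exact_mod_cast Nat.lt_succ_iff.mp (by exact_mod_cast hlt)
  have hlen3 : 3 ≤ w.length := hw.three_le_length
  -- the tail of the support is `rest ++ [u]`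
  have htne : w.support.tail ≠ [] := by
    intro h
    have h2 := w.length_support
    rw [w.support_eq_cons] at h2
    rw [h] at h2
    simp only [List.length_cons, List.length_nil] at h2
    omega
  have hlast : w.support.tail.getLast htne = u := by
    rw [List.getLast_tail]
    exact w.getLast_support
  set restF : List (Fin 67) := w.support.tail.dropLast with hrestF
  have hsplit : restF ++ [u] = w.support.tail := by
    have h := List.dropLast_append_getLast htne
    rw [hlast] at h
    exact h
  have hndtail : w.support.tail.Nodup := hw.support_nodup
  have hndF : restF.Nodup := by
    rw [← hsplit] at hndtail
    exact (List.Nodup.of_append_left hndtail)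
  have hunotin : u ∉ restF := by
    rw [← hsplit] at hndtail
    intro hmem
    exact (List.disjoint_of_nodup_append hndtail) hmem (List.mem_singleton_self u)
  have hlenrest : restF.length = w.length - 1 := by
    have h1 := congr_arg List.length hsplit
    have h2 := w.length_support
    rw [List.length_append, List.length_singleton] at h1
    have h3 : w.support.length = w.support.tail.length + 1 := by
      rw [w.support_eq_cons]; simp
    omega
  -- transfer to ℕ
  have hchainF : List.Chain cage47.Adj u w.support.tail := by
    have := w.isChain_adj_support
    rw [w.support_eq_cons] at this
    exact this
  have hchainF' : List.Chain cage47.Adj u (restF ++ [u]) := by rw [hsplit]; exact hchainF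
  have hchainN : List.Chain (fun a b => b ∈ nbrL a) (u : ℕ)
      ((restF.map (Fin.val)) ++ [(u : ℕ)]) := by
    have : List.Chain (fun a b => b ∈ nbrL a) (u : ℕ)
        ((restF ++ [u]).map (Fin.val)) := by
      refine (List.isChain_cons_map Fin.val (b := u)).mpr ?_
      exact List.IsChain.imp (fun a b hab => adj_mem_nbr a b hab) hchainF'
    simpa using this
  have hgoodfalse : good 6 (u : ℕ) (u : ℕ) [(u : ℕ)] = false := by
    apply good_sound (u : ℕ) (restF.map Fin.val) 6 (u : ℕ) [(u : ℕ)]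
    · rw [List.length_map]; omega
    · exact hchainN
    · intro x hx
      obtain ⟨y, hy, rfl⟩ := List.mem_map.mp hx
      have hy1 : u ≤ y := hsupp y (by rw [← hsplit]; exact List.mem_append_left _ hy)
      have hy2 : y ≠ u := fun h => hunotin (h ▸ hy)
      constructor
      · have : u < y := lt_of_le_of_ne hy1 (Ne.symm hy2)
        exact this
      · simp only [List.mem_singleton]
        intro h
        exact hy2 (Fin.val_injective h)
    · exact hndF.map Fin.val_injective
    · rw [List.length_map, List.length_singleton]; omega
  have hgoodtrue : good 6 (u : ℕ) (u : ℕ) [(u : ℕ)] = true := by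
    have := check_eq_true
    rw [check, List.all_eq_true] at this
    exact this (u : ℕ) (List.mem_range.mpr u.isLt)
  rw [hgoodtrue] at hgoodfalse
  exact Bool.noConfusion hgoodfalse

/-- The explicit 67-vertex graph given by the adjacency list in the paper has girth
exactly 7. -/
theorem cage47_girth : cage47.egirth = 7 :=
  le_antisymm egirth_le_seven seven_le_egirth
end
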